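/- Let r ≥ 2, let G be a graph with no K_r minor, and let S ⊆ V(G). Then the number of distinct sets of the form N(C) ∩ S, over all connected components C of G − S, is at most e(|S|, r) + w(|S|, r) + 1, where e(n, r) is the maximum number of edges and w(n, r) is the maximum number of nonempty cliques of an n-vertex graph with no K_r minor. -/

import Mathlib

open SimpleGraph

/-- `H` is a minor of `G`: there is a family of nonempty, pairwise disjoint, connected
branch sets in `G`, one for each vertex of `H`, such that branch sets of adjacent
vertices of `H` are joined by an edge of `G`. -/
def MinorOf {W V : Type*} (H : SimpleGraph W) (G : SimpleGraph V) : Prop :=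
  ∃ B : W → Set V,
    (∀ w, (G.induce (B w)).Connected) ∧
    (Pairwise fun w w' => Disjoint (B w) (B w')) ∧
    (∀ u v : W, H.Adj u v → ∃ x ∈ B u, ∃ y ∈ B v, G.Adj x y)
/-- `C` is a connected component of `G - S`. -/
def IsCompOf {V : Type*} (G : SimpleGraph V) (S C : Set V) : Prop :=
  Disjoint C S ∧ (G.induce C).Connected ∧
    ∀ v, v ∉ C → (∃ c ∈ C, G.Adj c v) → v ∈ S

lemma isCompOf_subset {V : Type*} {G : SimpleGraph V} {S C C' : Set V}
    (hC : IsCompOf G S C) (hC' : IsCompOf G S C') {z : V} (hz : z ∈ C) (hz' : z ∈ C') :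
    C ⊆ C' := by
  intro v hv
  suffices h : ∀ (a b : C) (_ : (G.induce C).Walk a b), (a : V) ∈ C' → (b : V) ∈ C' by
    obtain ⟨p⟩ := hC.2.1.preconnected ⟨z, hz⟩ ⟨v, hv⟩
    exact h _ _ p hz'
  intro a b p
  induction p with
  | nil => exact id
  | @cons x y w h q ih =>
    intro hx
    apply ih
    by_contra hy
    have hadj : G.Adj (x : V) (y : V) := by simpa using h
    have : (y : V) ∈ S := hC'.2.2 y hy ⟨x, hx, hadj⟩
    exact Set.disjoint_left.mp hC.1 y.2 this

lemma isCompOf_eq {V : Type*} {G : SimpleGraph V} {S C C' : Set V}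
    (hC : IsCompOf G S C) (hC' : IsCompOf G S C') (h : (C ∩ C').Nonempty) : C = C' := by
  obtain ⟨z, hz, hz'⟩ := h
  exact subset_antisymm (isCompOf_subset hC hC' hz hz') (isCompOf_subset hC' hC hz' hz)

lemma walk_union_connected {W V : Type*} {B : SimpleGraph W} {C : SimpleGraph V} {s : Set W}
    (Q : W → Set V) (Qconn : ∀ w, (C.induce (Q w)).Connected)
    (Qadj : ∀ u v, B.Adj u v → ∃ x ∈ Q u, ∃ y ∈ Q v, C.Adj x y)
    {a b : s} (p : (B.induce s).Walk a b) :
    (C.induce (⋃ x ∈ p.support, Q (x : W))).Connected := by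
  induction p with
  | nil =>
    rename_i u
    have hset : (⋃ x ∈ (Walk.nil : (B.induce s).Walk u u).support, Q (x : W)) = Q (u : W) := by
      ext v; simp
    rw [hset]; exact Qconn _
  | @cons x y w h q ih =>
    have hset : (⋃ z ∈ (Walk.cons h q).support, Q (z : W)) =
        Q (x : W) ∪ ⋃ z ∈ q.support, Q (z : W) := by
      ext v
      simp only [Walk.support_cons, List.mem_cons, Set.mem_iUnion, Set.mem_union]
      constructor
      · rintro ⟨z, (rfl | hz), hvz⟩
        exacts [Or.inl hvz, Or.inr ⟨z, hz, hvz⟩]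
      · rintro (hv | ⟨z, hz, hvz⟩)
        exacts [⟨x, Or.inl rfl, hv⟩, ⟨z, Or.inr hz, hvz⟩]
    rw [hset]
    have hadj : B.Adj (x : W) (y : W) := by simpa using h
    obtain ⟨u, hu, v, hv, huv⟩ := Qadj _ _ hadj
    have hv' : v ∈ ⋃ z ∈ q.support, Q (z : W) :=
      Set.mem_biUnion q.start_mem_support hv
    exact connected_induce_union (Qconn _).preconnected ih.preconnected hu hv' huv

lemma minorOf_trans {U W V : Type*} {A : SimpleGraph U} {B : SimpleGraph W} {C : SimpleGraph V}
    (h1 : MinorOf A B) (h2 : MinorOf B C) : MinorOf A C := by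
  obtain ⟨P, Pconn, Pdisj, Padj⟩ := h1
  obtain ⟨Q, Qconn, Qdisj, Qadj⟩ := h2
  refine ⟨fun a => ⋃ w ∈ P a, Q w, ?_, ?_, ?_⟩
  · intro a
    obtain ⟨⟨w₀, hw₀⟩⟩ := (Pconn a).nonempty
    obtain ⟨⟨u₀, hu₀⟩⟩ := (Qconn w₀).nonempty
    apply C.induce_connected_of_patches u₀ (Set.mem_biUnion hw₀ hu₀)
    intro v hv
    obtain ⟨w, hw, hvw⟩ := Set.mem_iUnion₂.mp hv
    obtain ⟨p⟩ := (Pconn a).preconnected ⟨w₀, hw₀⟩ ⟨w, hw⟩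
    refine ⟨⋃ x ∈ p.support, Q (x : W), ?_, ?_, ?_, ?_⟩
    · intro y hy
      obtain ⟨x, hx, hyx⟩ := Set.mem_iUnion₂.mp hy
      exact Set.mem_biUnion x.2 hyx
    · exact Set.mem_biUnion p.start_mem_support hu₀
    · exact Set.mem_biUnion p.end_mem_support hvw
    · exact (walk_union_connected Q Qconn Qadj p).preconnected _ _
  · intro a a' haa'
    rw [Set.disjoint_left]
    rintro x hx hx'
    obtain ⟨w, hw, hxw⟩ := Set.mem_iUnion₂.mp hx
    obtain ⟨w', hw', hxw'⟩ := Set.mem_iUnion₂.mp hx'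
    rcases eq_or_ne w w' with rfl | hne
    · exact Set.disjoint_left.mp (Pdisj haa') hw hw'
    · exact Set.disjoint_left.mp (Qdisj hne) hxw hxw'
  · intro u v huv
    obtain ⟨w, hw, w', hw', hww'⟩ := Padj u v huv
    obtain ⟨x, hx, y, hy, hxy⟩ := Qadj _ _ hww'
    exact ⟨x, Set.mem_biUnion hw hx, y, Set.mem_biUnion hw' hy, hxy⟩

lemma induce_singleton_connected {V : Type*} (G : SimpleGraph V) (x : V) :
    (G.induce {x}).Connected := by
  rw [connected_iff]
  refine ⟨fun a b => ?_, ⟨⟨x, rfl⟩⟩⟩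
  have : a = b := Subtype.ext (a.2.trans b.2.symm)
  exact this ▸ Reachable.refl _

/-- Let `r ≥ 2`, let `G` have no `K_r` minor, and let `S ⊆ V(G)`.  If `E` (resp. `Wc`)
bounds the number of edges (resp. of nonempty cliques) of every `K_r`-minor-free graph on
`|S|` vertices, then the number of distinct sets of the form `N(C) ∩ S`, over connected
components `C` of `G − S`, is at most `E + Wc + 1`. -/
theorem stmt11 {V : Type*} (G : SimpleGraph V) (r : ℕ) (hr : 2 ≤ r)
    (hG : ¬ MinorOf (⊤ : SimpleGraph (Fin r)) G)
    (S : Finset V) (E Wc : ℕ)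
    (hE : ∀ G' : SimpleGraph (Fin S.card), ¬ MinorOf (⊤ : SimpleGraph (Fin r)) G' →
      G'.edgeSet.ncard ≤ E)
    (hW : ∀ G' : SimpleGraph (Fin S.card), ¬ MinorOf (⊤ : SimpleGraph (Fin r)) G' →
      {t : Finset (Fin S.card) | t.Nonempty ∧ G'.IsClique (t : Set (Fin S.card))}.ncard ≤ Wc) :
    {A : Set V | ∃ D : Set V, IsCompOf G (S : Set V) D ∧
      A = (S : Set V) ∩ {x | ∃ d ∈ D, G.Adj d x}}.ncard ≤ E + Wc + 1 := by
  classical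
  set n := S.card with hn
  set ι : Fin n → V := fun i => ((S.equivFin.symm i) : V) with hι
  have hι_mem : ∀ i, ι i ∈ S := fun i => (S.equivFin.symm i).2
  have hι_inj : Function.Injective ι := fun i j h => by
    have := Subtype.val_injective (a₁ := S.equivFin.symm i) (a₂ := S.equivFin.symm j) h
    exact S.equivFin.symm.injective this
  have hι_surj : ∀ v ∈ S, ∃ i, ι i = v := fun v hv =>
    ⟨S.equivFin ⟨v, hv⟩, by simp [hι]⟩
  set N : Set V → Set V := fun D => (S : Set V) ∩ {x | ∃ d ∈ D, G.Adj d x} with hN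
  set 𝒮 : Set (Set V) := {A | ∃ D : Set V, IsCompOf G (S : Set V) D ∧ A = N D} with h𝒮
  set F : Set V → Finset (Fin n) := fun A => Finset.univ.filter (fun i => ι i ∈ A) with hF
  have hFmem : ∀ (A : Set V) (i : Fin n), i ∈ F A ↔ ι i ∈ A := by
    intro A i; simp [hF]
  have hF_inj : Set.InjOn F 𝒮 := by
    rintro A ⟨D, hD, rfl⟩ A' ⟨D', hD', rfl⟩ hFF
    ext x
    constructor
    · intro hx
      obtain ⟨i, rfl⟩ := hι_surj x hx.1
      have : i ∈ F (N D) := (hFmem _ _).mpr hx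
      rw [hFF] at this
      exact (hFmem _ _).mp this
    · intro hx
      obtain ⟨i, rfl⟩ := hι_surj x hx.1
      have : i ∈ F (N D') := (hFmem _ _).mpr hx
      rw [← hFF] at this
      exact (hFmem _ _).mp this
  have h1 : 𝒮.ncard = (F '' 𝒮).ncard := (Set.ncard_image_of_injOn hF_inj).symm
  set T' : Set (Finset (Fin n)) := {t | t ∈ F '' 𝒮 ∧ t.Nonempty} with hT'
  have hsub : F '' 𝒮 ⊆ insert ∅ T' := by
    intro t ht
    rcases Finset.eq_empty_or_nonempty t with rfl | htn
    · exact Set.mem_insert _ _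
    · exact Set.mem_insert_of_mem _ ⟨ht, htn⟩
  have h2 : (F '' 𝒮).ncard ≤ T'.ncard + 1 :=
    le_trans (Set.ncard_le_ncard hsub (Set.toFinite _)) (Set.ncard_insert_le _ _)
  -- choose components
  have hDex : ∀ t : Finset (Fin n), ∃ Dt : Set V,
      t ∈ T' → IsCompOf G (S : Set V) Dt ∧ F (N Dt) = t := by
    intro t
    by_cases ht : t ∈ T'
    · obtain ⟨A, ⟨D, hD, rfl⟩, hFA⟩ := ht.1
      exact ⟨D, fun _ => ⟨hD, hFA⟩⟩
    · exact ⟨∅, fun h => absurd h ht⟩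
  choose D hD using hDex
  have hDcomp : ∀ t ∈ T', IsCompOf G (S : Set V) (D t) := fun t ht => (hD t ht).1
  have hmem : ∀ t ∈ T', ∀ i : Fin n, i ∈ t ↔ ι i ∈ N (D t) := by
    intro t ht i
    conv_lhs => rw [← (hD t ht).2]
    exact hFmem _ _
  have hDdisj : ∀ t ∈ T', ∀ t' ∈ T', t ≠ t' → Disjoint (D t) (D t') := by
    intro t ht t' ht' hne
    by_contra hdisj
    rw [Set.not_disjoint_iff_nonempty_inter] at hdisj
    have heq := isCompOf_eq (hDcomp t ht) (hDcomp t' ht') hdisj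
    apply hne
    rw [← (hD t ht).2, ← (hD t' ht').2, heq]
  -- maximal representable graph
  set P : SimpleGraph (Fin n) → Prop := fun H => ∃ f : Sym2 (Fin n) → Finset (Fin n),
    (∀ e ∈ H.edgeSet, f e ∈ T' ∧ ∀ i ∈ e, i ∈ f e) ∧ Set.InjOn f H.edgeSet with hP
  have hP0 : P ⊥ := by
    refine ⟨fun _ => ∅, ?_, ?_⟩
    · simp
    · rw [edgeSet_bot]; exact fun x hx => absurd hx (Set.notMem_empty x)
  obtain ⟨H, hPH, hHmax⟩ : ∃ H, P H ∧ ∀ H', P H' → H'.edgeSet.ncard ≤ H.edgeSet.ncard := by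
    set K : Set ℕ := {k | ∃ H, P H ∧ H.edgeSet.ncard = k} with hK
    have hKne : K.Nonempty := ⟨_, ⊥, hP0, rfl⟩
    have hKfin : K.Finite := by
      apply Set.Finite.subset (Set.finite_Iic (Fintype.card (Sym2 (Fin n))))
      rintro k ⟨H, _, rfl⟩
      have := Set.ncard_le_ncard (Set.subset_univ H.edgeSet) Set.finite_univ
      simpa [Set.ncard_univ] using this
    obtain ⟨k, hkK, hkmax⟩ := Set.exists_max_image K id hKfin hKne
    obtain ⟨H, hPH, rfl⟩ := hkK
    exact ⟨H, hPH, fun H' hPH' => hkmax _ ⟨H', hPH', rfl⟩⟩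
  obtain ⟨f, hf, hfinj⟩ := hPH
  -- adjacency of components to marked vertices
  have hadjD : ∀ t ∈ T', ∀ i ∈ t, ∃ d ∈ D t, G.Adj d (ι i) := by
    intro t ht i hi
    have := (hmem t ht i).mp hi
    exact this.2
  -- H is a minor of G
  have hHG : MinorOf H G := by
    refine ⟨fun i => insert (ι i)
      (⋃ e ∈ {e | e ∈ H.edgeSet ∧ e.out.1 = i}, D (f e)), ?_, ?_, ?_⟩
    · intro i
      apply G.induce_connected_of_patches (ι i) (Set.mem_insert _ _)
      intro v hv
      rcases hv with rfl | hv
      · exact ⟨{ι i}, by simp, rfl, rfl, Reachable.refl _⟩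
      · obtain ⟨e, ⟨heE, hei⟩, hvD⟩ := Set.mem_iUnion₂.mp hv
        have htf : f e ∈ T' := (hf e heE).1
        have hif : i ∈ f e := by
          rw [← hei]; exact (hf e heE).2 _ (Sym2.out_fst_mem e)
        obtain ⟨d, hd, hdadj⟩ := hadjD _ htf i hif
        refine ⟨insert (ι i) (D (f e)), ?_, Set.mem_insert _ _, Set.mem_insert_of_mem _ hvD, ?_⟩
        · intro y hy
          rcases hy with rfl | hy
          · exact Set.mem_insert _ _
          · exact Set.mem_insert_of_mem _ (Set.mem_biUnion ⟨heE, hei⟩ hy)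
        · have hconn : (G.induce (insert (ι i) (D (f e)))).Connected := by
            have : insert (ι i) (D (f e)) = D (f e) ∪ {ι i} := by
              ext y; simp [or_comm]
            rw [this]
            exact connected_induce_union ((hDcomp _ htf).2.1).preconnected
              (induce_singleton_connected G (ι i)).preconnected hd rfl hdadj
          exact hconn.preconnected _ _
    · intro i j hij
      rw [Set.disjoint_left]
      rintro x (rfl | hx)
      · rintro (h | hx')
        · exact hij (hι_inj h)
        · obtain ⟨e, ⟨heE, _⟩, hxD⟩ := Set.mem_iUnion₂.mp hx'
          exact Set.disjoint_left.mp (hDcomp _ (hf e heE).1).1 hxD (hι_mem i)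
      · obtain ⟨e, ⟨heE, hei⟩, hxD⟩ := Set.mem_iUnion₂.mp hx
        rintro (rfl | hx')
        · exact Set.disjoint_left.mp (hDcomp _ (hf e heE).1).1 hxD (hι_mem j)
        · obtain ⟨e', ⟨heE', hej⟩, hxD'⟩ := Set.mem_iUnion₂.mp hx'
          have hee' : e ≠ e' := by
            rintro rfl; exact hij (hei ▸ hej ▸ rfl)
          have hfe : f e ≠ f e' := fun h => hee' (hfinj heE heE' h)
          exact Set.disjoint_left.mp
            (hDdisj _ (hf e heE).1 _ (hf e' heE').1 hfe) hxD hxD'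
    · intro u v huv
      set e : Sym2 (Fin n) := s(u, v) with he
      have heE : e ∈ H.edgeSet := huv
      have htf : f e ∈ T' := (hf e heE).1
      have huf : u ∈ f e := (hf e heE).2 _ (by rw [he]; exact Sym2.mem_mk_left u v)
      have hvf : v ∈ f e := (hf e heE).2 _ (by rw [he]; exact Sym2.mem_mk_right u v)
      have hout : e.out.1 = u ∨ e.out.1 = v := Sym2.mem_iff.mp (Sym2.out_fst_mem e)
      rcases hout with hu | hv
      · obtain ⟨d, hd, hdadj⟩ := hadjD _ htf v hvf
        exact ⟨d, Set.mem_insert_of_mem _ (Set.mem_biUnion ⟨heE, hu⟩ hd),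
          ι v, Set.mem_insert _ _, hdadj⟩
      · obtain ⟨d, hd, hdadj⟩ := hadjD _ htf u huf
        exact ⟨ι u, Set.mem_insert _ _,
          d, Set.mem_insert_of_mem _ (Set.mem_biUnion ⟨heE, hv⟩ hd), hdadj.symm⟩
  have hHfree : ¬ MinorOf (⊤ : SimpleGraph (Fin r)) H := fun h => hG (minorOf_trans h hHG)
  -- every unused neighborhood is a clique of H
  have hclique : ∀ t ∈ T', t ∉ f '' H.edgeSet →
      t ∈ {t : Finset (Fin n) | t.Nonempty ∧ H.IsClique (t : Set (Fin n))} := by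
    intro t ht htim
    refine ⟨ht.2, ?_⟩
    intro i hi j hj hij
    by_contra hadj
    have hnot : s(i, j) ∉ H.edgeSet := by rwa [mem_edgeSet]
    set H' : SimpleGraph (Fin n) := H ⊔ fromEdgeSet {s(i, j)} with hH'
    have hE' : H'.edgeSet = insert s(i, j) H.edgeSet := by
      rw [hH', edgeSet_sup, edgeSet_fromEdgeSet]
      have : ({s(i, j)} : Set (Sym2 (Fin n))) \ Sym2.diagSet = {s(i, j)} := by
        ext e
        simp only [Set.mem_diff, Set.mem_singleton_iff, Set.mem_setOf_eq, Sym2.mem_diagSet]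
        constructor
        · exact fun h => h.1
        · rintro rfl
          exact ⟨rfl, by rw [Sym2.mk_isDiag_iff]; exact hij⟩
      rw [this, Set.union_singleton]
    have hPH' : P H' := by
      refine ⟨Function.update f s(i, j) t, ?_, ?_⟩
      · intro e he
        rw [hE'] at he
        rcases he with rfl | he
        · rw [Function.update_self]
          refine ⟨ht, fun k hk => ?_⟩
          rcases Sym2.mem_iff.mp hk with rfl | rfl
          exacts [hi, hj]
        · have hne : e ≠ s(i, j) := fun h => hnot (h ▸ he)
          rw [Function.update_of_ne hne]
          exact hf e he
      · intro e₁ h₁ e₂ h₂ heq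
        rw [hE'] at h₁ h₂
        rcases h₁ with rfl | h₁ <;> rcases h₂ with rfl | h₂
        · rfl
        · have hne : e₂ ≠ s(i, j) := fun h => hnot (h ▸ h₂)
          rw [Function.update_self, Function.update_of_ne hne] at heq
          exact absurd ⟨e₂, h₂, heq.symm⟩ htim
        · have hne : e₁ ≠ s(i, j) := fun h => hnot (h ▸ h₁)
          rw [Function.update_self, Function.update_of_ne hne] at heq
          exact absurd ⟨e₁, h₁, heq⟩ htim
        · have hne₁ : e₁ ≠ s(i, j) := fun h => hnot (h ▸ h₁)
          have hne₂ : e₂ ≠ s(i, j) := fun h => hnot (h ▸ h₂)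
          rw [Function.update_of_ne hne₁, Function.update_of_ne hne₂] at heq
          exact hfinj h₁ h₂ heq
    have hcard : H'.edgeSet.ncard = H.edgeSet.ncard + 1 := by
      rw [hE', Set.ncard_insert_of_notMem hnot (Set.toFinite _)]
    have := hHmax H' hPH'
    omega
  have hTsub : T' ⊆ (f '' H.edgeSet) ∪
      {t : Finset (Fin n) | t.Nonempty ∧ H.IsClique (t : Set (Fin n))} := by
    intro t ht
    by_cases htim : t ∈ f '' H.edgeSet
    · exact Or.inl htim
    · exact Or.inr (hclique t ht htim)
  have h3 : T'.ncard ≤ E + Wc := by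
    calc T'.ncard ≤ ((f '' H.edgeSet) ∪
        {t : Finset (Fin n) | t.Nonempty ∧ H.IsClique (t : Set (Fin n))}).ncard :=
          Set.ncard_le_ncard hTsub (Set.toFinite _)
      _ ≤ (f '' H.edgeSet).ncard +
        {t : Finset (Fin n) | t.Nonempty ∧ H.IsClique (t : Set (Fin n))}.ncard :=
          Set.ncard_union_le _ _
      _ ≤ E + Wc := by
          gcongr
          · exact le_trans (Set.ncard_image_le (Set.toFinite _)) (hE H hHfree)
          · exact hW H hHfree
  calc 𝒮.ncard = (F '' 𝒮).ncard := h1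
    _ ≤ T'.ncard + 1 := h2
    _ ≤ E + Wc + 1 := by omega
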